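/- Let G = (A,B,C;E) be a bilaterally-complete tripartite graph with complete sides G[A∪B] and G[A∪C] and |A| = p. Then there exist pairwise disjoint matchings M_1, …, M_k in G[B∪C] with k ≤ p and |M_1| + ⋯ + |M_k| = τ△(G). -/

import Mathlib

open SimpleGraph

variable {V : Type*}

/-- The set of edges of a triangle, given by its vertex set `t`:
all unordered pairs of distinct vertices of `t`. -/
def triangleEdges (t : Finset V) : Set (Sym2 V) :=
  {e | ∃ u ∈ t, ∃ v ∈ t, u ≠ v ∧ e = s(u, v)}

/-- `E'` is a `𝒯`-transversal of `G`: a set of edges of `G` meeting every triangle of `G`. -/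
def IsTriTransversal (G : SimpleGraph V) (E' : Set (Sym2 V)) : Prop :=
  E' ⊆ G.edgeSet ∧ ∀ t : Finset V, G.IsNClique 3 t → ∃ e ∈ triangleEdges t, e ∈ E'

/-- `τ△ G`: the minimum cardinality of a `𝒯`-transversal of `G`. -/
noncomputable def triTransversalNum (G : SimpleGraph V) : ℕ :=
  sInf {n | ∃ E' : Set (Sym2 V), IsTriTransversal G E' ∧ E'.ncard = n}

/-- `P` is a packing in `G`: a set of triangles of `G` that are pairwise edge-disjoint. -/
def IsTriPacking (G : SimpleGraph V) (P : Set (Finset V)) : Prop :=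
  (∀ t ∈ P, G.IsNClique 3 t) ∧
    P.Pairwise fun t t' => Disjoint (triangleEdges t) (triangleEdges t')

/-- `ν△ G`: the maximum cardinality of a packing of triangles in `G`. -/
noncomputable def triPackingNum (G : SimpleGraph V) : ℕ :=
  sSup {n | ∃ P : Set (Finset V), IsTriPacking G P ∧ P.ncard = n}

/-- The set of edges of `G` with one endpoint in `M` and the other in `W`. -/
def edgesBetween (G : SimpleGraph V) (M W : Set V) : Set (Sym2 V) :=
  {e | e ∈ G.edgeSet ∧ ∃ u ∈ M, ∃ w ∈ W, e = s(u, w)}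

/-- `G` is tripartite with parts `A`, `B`, `C`: the vertex set is partitioned into
the three independent sets `A`, `B`, `C`. -/
def IsTripartition (G : SimpleGraph V) (A B C : Set V) : Prop :=
  A ∪ B ∪ C = Set.univ ∧ Disjoint A B ∧ Disjoint A C ∧ Disjoint B C ∧
    (∀ u ∈ A, ∀ v ∈ A, ¬G.Adj u v) ∧ (∀ u ∈ B, ∀ v ∈ B, ¬G.Adj u v) ∧
    (∀ u ∈ C, ∀ v ∈ C, ¬G.Adj u v)

/-- The side `G[X ∪ Y]` of a tripartite graph is a complete bipartite graph. -/
def CompleteSide (G : SimpleGraph V) (X Y : Set V) : Prop :=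
  ∀ x ∈ X, ∀ y ∈ Y, G.Adj x y

/-- `W` is a vertex cover of the subgraph edge-induced by the edge set `Y`. -/
def CoversEdges (W : Set V) (Y : Set (Sym2 V)) : Prop :=
  ∀ e ∈ Y, ∃ v ∈ W, v ∈ e

/-- `M` is a matching consisting of edges from the edge set `F`:
the edges of `M` are pairwise vertex-disjoint. -/
def IsMatchingIn (F : Set (Sym2 V)) (M : Set (Sym2 V)) : Prop :=
  M ⊆ F ∧ M.Pairwise fun e f => ∀ v, v ∈ e → v ∉ f


namespace TauAux
variable {V : Type*} [DecidableEq V]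

def deg (H : Finset (Sym2 V)) (v : V) : ℕ := (H.filter (fun e => v ∈ e)).card

def IsM (M : Finset (Sym2 V)) : Prop := ∀ e ∈ M, ∀ f ∈ M, e ≠ f → ∀ v, v ∈ e → v ∉ f

def Fre (M : Finset (Sym2 V)) (v : V) : Prop := ∀ e ∈ M, v ∉ e

lemma deg_congr {H K : Finset (Sym2 V)} {v : V} (h : ∀ e, v ∈ e → (e ∈ K ↔ e ∈ H)) :
    deg K v = deg H v := by
  unfold deg
  congr 1
  ext e
  simp only [Finset.mem_filter]
  constructor
  · rintro ⟨he, hv⟩; exact ⟨(h e hv).1 he, hv⟩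
  · rintro ⟨he, hv⟩; exact ⟨(h e hv).2 he, hv⟩

lemma deg_insert_of_mem {H : Finset (Sym2 V)} {e : Sym2 V} (he : e ∉ H) {v : V} (hv : v ∈ e) :
    deg (insert e H) v = deg H v + 1 := by
  unfold deg
  rw [Finset.filter_insert, if_pos hv, Finset.card_insert_of_notMem]
  simp [he]

lemma deg_insert_of_not_mem {H : Finset (Sym2 V)} {e : Sym2 V} {v : V} (hv : v ∉ e) :
    deg (insert e H) v = deg H v := by
  unfold deg
  rw [Finset.filter_insert, if_neg hv]

lemma deg_erase_of_mem {H : Finset (Sym2 V)} {e : Sym2 V} (he : e ∈ H) {v : V} (hv : v ∈ e) :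
    deg (H.erase e) v + 1 = deg H v := by
  unfold deg
  rw [Finset.filter_erase, Finset.card_erase_add_one]
  simp [he, hv]

lemma deg_erase_of_not_mem {H : Finset (Sym2 V)} {e : Sym2 V} {v : V} (hv : v ∉ e) :
    deg (H.erase e) v = deg H v := by
  unfold deg
  rw [Finset.filter_erase, Finset.erase_eq_of_notMem]
  simp [hv]

lemma deg_le_of_subset {H K : Finset (Sym2 V)} (h : H ⊆ K) (v : V) : deg H v ≤ deg K v :=
  Finset.card_le_card (Finset.filter_subset_filter _ h)

lemma mem_deg_pos {H : Finset (Sym2 V)} {e : Sym2 V} (he : e ∈ H) {v : V} (hv : v ∈ e) :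
    1 ≤ deg H v := Finset.card_pos.2 ⟨e, Finset.mem_filter.2 ⟨he, hv⟩⟩


lemma isM_insert {M : Finset (Sym2 V)} (hM : IsM M) {x y : V}
    (hx : Fre M x) (hy : Fre M y) : IsM (insert s(x, y) M) := by
  intro e he f hf hne w hwe hwf
  rcases Finset.mem_insert.1 he with he' | he'
  · rcases Finset.mem_insert.1 hf with hf' | hf'
    · exact hne (he'.trans hf'.symm)
    · subst he'
      rcases Sym2.mem_iff.1 hwe with rfl | rfl
      · exact hx f hf' hwf
      · exact hy f hf' hwf
  · rcases Finset.mem_insert.1 hf with hf' | hf'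
    · subst hf'
      rcases Sym2.mem_iff.1 hwf with rfl | rfl
      · exact hx e he' hwe
      · exact hy e he' hwe
    · exact hM e he' f hf' hne w hwe hwf

lemma swap : ∀ (n : ℕ) (X Y : Set V), Disjoint X Y →
    ∀ M₁ M₂ : Finset (Sym2 V), M₁.card + M₂.card ≤ n → IsM M₁ → IsM M₂ → Disjoint M₁ M₂ →
    (∀ e ∈ M₁, ∃ x ∈ X, ∃ y ∈ Y, e = s(x, y)) → (∀ e ∈ M₂, ∃ x ∈ X, ∃ y ∈ Y, e = s(x, y)) →
    ∀ v ∈ X, Fre M₂ v →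
    ∃ N₁ N₂ : Finset (Sym2 V), IsM N₁ ∧ IsM N₂ ∧ Disjoint N₁ N₂ ∧ N₁ ∪ N₂ = M₁ ∪ M₂ ∧
      Fre N₁ v ∧
      (∀ u ∈ Y, Fre M₁ u → Fre N₁ u ∧ ∀ e, u ∈ e → (e ∈ N₂ ↔ e ∈ M₂)) ∧
      (∀ u ∈ X, u ≠ v → Fre M₂ u → Fre N₂ u ∧ ∀ e, u ∈ e → (e ∈ N₁ ↔ e ∈ M₁)) := by
  intro n
  induction n with
  | zero =>
    intro X Y hd M₁ M₂ hcard h1 h2 hdis hs1 hs2 v hv hfv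
    have hM1 : M₁ = ∅ := Finset.card_eq_zero.1 (Nat.le_antisymm (le_trans (Nat.le_add_right _ _) hcard) (Nat.zero_le _))
    refine ⟨M₁, M₂, h1, h2, hdis, rfl, ?_, fun u _ hu => ⟨hu, fun _ _ => Iff.rfl⟩,
      fun u _ _ hu => ⟨hu, fun _ _ => Iff.rfl⟩⟩
    intro e he
    simp [hM1] at he
  | succ n ih =>
    intro X Y hd M₁ M₂ hcard h1 h2 hdis hs1 hs2 v hv hfv
    by_cases hfv1 : Fre M₁ v
    · exact ⟨M₁, M₂, h1, h2, hdis, rfl, hfv1, fun u _ hu => ⟨hu, fun _ _ => Iff.rfl⟩,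
        fun u _ _ hu => ⟨hu, fun _ _ => Iff.rfl⟩⟩
    · -- v is covered by some edge e₀ = s(v, a) of M₁
      have hex : ∃ e₀ ∈ M₁, v ∈ e₀ := by
        by_contra h
        push_neg at h
        exact hfv1 h
      obtain ⟨e₀, he₀, hve₀⟩ := hex
      obtain ⟨x, hx, a, hay, hexa⟩ := hs1 e₀ he₀
      have hvx : x = v := by
        subst hexa
        rcases Sym2.mem_iff.1 hve₀ with rfl | rfl
        · rfl
        · exact absurd rfl (hd.ne_of_mem hv hay)
      subst hvx
      subst hexa
      have hanev : a ≠ x := fun h => (hd.ne_of_mem hx hay) h.symm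
      have hbound : M₂.card + (M₁.erase s(x, a)).card ≤ n := by
        have h1c : 1 ≤ M₁.card := Finset.card_pos.2 ⟨_, he₀⟩
        rw [Finset.card_erase_of_mem he₀]
        omega
      have hfa : Fre (M₁.erase s(x, a)) a := by
        intro e he hae
        have heM : e ∈ M₁ := Finset.mem_of_mem_erase he
        have hne : e ≠ s(x, a) := Finset.ne_of_mem_erase he
        exact h1 s(x, a) he₀ e heM (fun h => hne h.symm) a (Sym2.mem_mk_right x a) hae
      have h2' : IsM (M₁.erase s(x, a)) := by
        intro e he f hf hne w hwe
        exact h1 e (Finset.mem_of_mem_erase he) f (Finset.mem_of_mem_erase hf) hne w hwe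
      obtain ⟨N₁c, N₂c, m1, m2, disc, unic, freea, clY, clX⟩ :=
        ih Y X hd.symm M₂ (M₁.erase s(x, a)) hbound h2 h2'
          (Finset.disjoint_left.2 fun {e} he he' =>
            Finset.disjoint_left.1 hdis (Finset.mem_of_mem_erase he') he)
          (fun e he => by
            obtain ⟨x', hx', y', hy', rfl⟩ := hs2 e he
            exact ⟨y', hy', x', hx', Sym2.eq_swap.symm⟩)
          (fun e he => by
            obtain ⟨x', hx', y', hy', rfl⟩ := hs1 e (Finset.mem_of_mem_erase he)
            exact ⟨y', hy', x', hx', Sym2.eq_swap.symm⟩)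
          a hay hfa
      have hvcl := clY x hx hfv
      have he₀notN₂c : s(x, a) ∉ N₂c := fun h => by
        have := (hvcl.2 s(x, a) (Sym2.mem_mk_left x a)).1 h
        exact (Finset.notMem_erase _ _) this
      have hfreN₁cx : Fre N₁c x := hvcl.1
      refine ⟨N₂c, insert s(x, a) N₁c, ?_, ?_, ?_, ?_, ?_, ?_, ?_⟩
      · exact m2
      · exact isM_insert m1 hfreN₁cx freea
      · rw [Finset.disjoint_insert_right]
        exact ⟨he₀notN₂c, disc.symm⟩
      · have h' : N₂c ∪ insert s(x, a) N₁c = insert s(x, a) (N₁c ∪ N₂c) := by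
          ext e; simp only [Finset.mem_insert, Finset.mem_union]; tauto
        rw [h', unic]
        ext e
        simp only [Finset.mem_insert, Finset.mem_union, Finset.mem_erase]
        constructor
        · rintro (rfl | he | ⟨_, he⟩)
          · exact Or.inl he₀
          · exact Or.inr he
          · exact Or.inl he
        · rintro (he | he)
          · by_cases h : e = s(x, a)
            · exact Or.inl h
            · exact Or.inr (Or.inr ⟨h, he⟩)
          · exact Or.inr (Or.inl he)
      · -- Fre N₂c x
        intro e he hxe
        have hmem := (hvcl.2 e hxe).1 he
        have heM : e ∈ M₁ := Finset.mem_of_mem_erase hmem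
        have hne : e ≠ s(x, a) := Finset.ne_of_mem_erase hmem
        exact h1 e heM s(x, a) he₀ hne x hxe (Sym2.mem_mk_left x a)
      · -- final Y clause
        intro u hu hfu
        have hune : u ≠ a := fun h => hfu s(x, a) he₀ (h ▸ Sym2.mem_mk_right x a)
        have hfu' : Fre (M₁.erase s(x, a)) u := fun e he => hfu e (Finset.mem_of_mem_erase he)
        obtain ⟨hf2, hiff⟩ := clX u hu hune hfu'
        refine ⟨hf2, fun e hue => ?_⟩
        have hunotx : u ∉ s(x, a) := by
          intro h
          rcases Sym2.mem_iff.1 h with rfl | rfl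
          · exact hd.ne_of_mem hx hu rfl
          · exact hune rfl
        rw [Finset.mem_insert]
        constructor
        · rintro (rfl | h)
          · exact absurd hue hunotx
          · exact (hiff e hue).1 h
        · intro h
          exact Or.inr ((hiff e hue).2 h)
      · -- final X clause
        intro u hu hune hfu
        obtain ⟨hf1, hiff⟩ := clY u hu hfu
        have hunotx : u ∉ s(x, a) := by
          intro h
          rcases Sym2.mem_iff.1 h with rfl | rfl
          · exact hune rfl
          · exact hd.ne_of_mem hu hay rfl
        constructor
        · intro e he hue
          rcases Finset.mem_insert.1 he with rfl | he'
          · exact hunotx hue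
          · exact hf1 e he' hue
        · intro e hue
          rw [hiff e hue]
          have hnee : e ≠ s(x, a) := fun h => hunotx (h ▸ hue)
          simp [Finset.mem_erase, hnee]

/-- Bipartite edge colouring: a bipartite edge finset of max degree ≤ p decomposes
into p matchings. -/
lemma coloring (X Y : Set V) (hd : Disjoint X Y) (p : ℕ) :
    ∀ (n : ℕ) (H : Finset (Sym2 V)), H.card ≤ n →
    (∀ e ∈ H, ∃ x ∈ X, ∃ y ∈ Y, e = s(x, y)) → (∀ v, deg H v ≤ p) →
    ∃ M : Fin p → Finset (Sym2 V), (∀ i, IsM (M i)) ∧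
      (∀ i j, i ≠ j → Disjoint (M i) (M j)) ∧ (∀ i, M i ⊆ H) ∧ (∀ e ∈ H, ∃ i, e ∈ M i) := by
  intro n
  induction n with
  | zero =>
    intro H hcard _ _
    have : H = ∅ := Finset.card_eq_zero.1 (Nat.le_antisymm hcard (Nat.zero_le _))
    subst this
    exact ⟨fun _ => ∅, fun i => by intro e he; simp at he,
      fun i j _ => by simp, fun i => by simp, fun e he => by simp at he⟩
  | succ n ih =>
    intro H hcard hstr hdeg
    rcases Finset.eq_empty_or_nonempty H with rfl | ⟨e, he⟩
    · exact ⟨fun _ => ∅, fun i => by intro e he; simp at he,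
        fun i j _ => by simp, fun i => by simp, fun e he => by simp at he⟩
    · obtain ⟨b, hb, c, hc, rfl⟩ := hstr e he
      set H₁ := H.erase s(b, c) with hH₁
      have hsub1 : H₁ ⊆ H := Finset.erase_subset _ _
      have henot : s(b, c) ∉ H₁ := Finset.notMem_erase _ _
      have hdeg1 : ∀ v, deg H₁ v ≤ p :=
        fun v => le_trans (Finset.card_le_card (Finset.filter_subset_filter _ hsub1)) (hdeg v)
      have hcard1 : H₁.card ≤ n := by
        rw [hH₁, Finset.card_erase_of_mem he]; omega
      obtain ⟨M, hM, hMd, hMs, hMc⟩ := ih H₁ hcard1 (fun f hf => hstr f (hsub1 hf)) hdeg1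
      have hnotj : ∀ j, s(b, c) ∉ M j := fun j h => henot (hMs j h)
      -- find colors free at b and at c
      have hfree : ∀ v ∈ s(b, c), ∃ i : Fin p, Fre (M i) v := by
        intro v hv
        by_contra h
        push_neg at h
        have hchoice : ∀ i : Fin p, ∃ f, f ∈ M i ∧ v ∈ f := by
          intro i
          have h' := h i
          unfold Fre at h'
          push_neg at h'
          exact h'
        choose g hg1 hg2 using hchoice
        have hinj : Set.InjOn g (Finset.univ : Finset (Fin p)) := by
          intro i _ j _ hij
          by_contra hne
          exact (Finset.disjoint_left.1 (hMd i j hne) (hg1 i)) (hij ▸ hg1 j)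
        have hmaps : ∀ i ∈ (Finset.univ : Finset (Fin p)), g i ∈ H₁.filter (fun f => v ∈ f) :=
          fun i _ => Finset.mem_filter.2 ⟨hMs i (hg1 i), hg2 i⟩
        have hple : p ≤ deg H₁ v := by
          have := Finset.card_le_card_of_injOn g hmaps hinj
          simpa [deg] using this
        have h5 : deg H₁ v + 1 = deg H v := by
          rw [hH₁]; exact deg_erase_of_mem he hv
        have h6 := hdeg v
        omega
      obtain ⟨α, hα⟩ := hfree b (Sym2.mem_mk_left b c)
      obtain ⟨β, hβ⟩ := hfree c (Sym2.mem_mk_right b c)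
      by_cases hcase : ∃ i : Fin p, Fre (M i) b ∧ Fre (M i) c
      · obtain ⟨i, hib, hic⟩ := hcase
        set M' := Function.update M i (insert s(b, c) (M i)) with hM'
        have hM'i : M' i = insert s(b, c) (M i) := by rw [hM', Function.update_self]
        have hM'o : ∀ j, j ≠ i → M' j = M j := fun j hj => by
          rw [hM', Function.update_of_ne hj]
        have hkey : ∀ j, (j = i ∧ M' j = insert s(b, c) (M i)) ∨ (j ≠ i ∧ M' j = M j) := by
          intro j
          rcases eq_or_ne j i with h | h
          · exact Or.inl ⟨h, by rw [h, hM'i]⟩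
          · exact Or.inr ⟨h, hM'o j h⟩
        refine ⟨M', ?_, ?_, ?_, ?_⟩
        · intro j
          rcases hkey j with ⟨_, h⟩ | ⟨_, h⟩
          · rw [h]; exact isM_insert (hM i) hib hic
          · rw [h]; exact hM j
        · intro j k hjk
          rcases hkey j with ⟨hj1, hj⟩ | ⟨hj1, hj⟩ <;> rcases hkey k with ⟨hk1, hk⟩ | ⟨hk1, hk⟩
          · exact absurd (hj1.trans hk1.symm) hjk
          · rw [hj, hk, Finset.disjoint_insert_left]
            exact ⟨hnotj k, hMd i k (fun h => hk1 h.symm)⟩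
          · rw [hj, hk, Finset.disjoint_insert_right]
            exact ⟨hnotj j, hMd j i hj1⟩
          · rw [hj, hk]; exact hMd j k hjk
        · intro j
          rcases hkey j with ⟨_, h⟩ | ⟨_, h⟩
          · rw [h]; exact Finset.insert_subset he (le_trans (hMs i) hsub1)
          · rw [h]; exact le_trans (hMs j) hsub1
        · intro f hf
          rcases eq_or_ne f s(b, c) with rfl | hne
          · exact ⟨i, by rw [hM'i]; exact Finset.mem_insert_self _ _⟩
          · obtain ⟨j, hj⟩ := hMc f (Finset.mem_erase.2 ⟨hne, hf⟩)
            rcases hkey j with ⟨hj1, h⟩ | ⟨hj1, h⟩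
            · exact ⟨j, by rw [h]; exact Finset.mem_insert_of_mem (hj1 ▸ hj)⟩
            · exact ⟨j, by rw [h]; exact hj⟩
      · -- α ≠ β, swap colors α and β along the Kempe chain from c
        have hαβ : α ≠ β := by
          rintro rfl
          exact hcase ⟨α, hα, hβ⟩
        have hstrM : ∀ i : Fin p, ∀ f ∈ M i, ∃ y ∈ Y, ∃ x ∈ X, f = s(y, x) := by
          intro i f hf
          obtain ⟨x, hx, y, hy, rfl⟩ := hstr f (hsub1 (hMs i hf))
          exact ⟨y, hy, x, hx, Sym2.eq_swap.symm⟩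
        obtain ⟨N₁, N₂, m1, m2, dis, uni, hfreeN₁c, clY, clX⟩ :=
          swap ((M α).card + (M β).card) Y X hd.symm (M α) (M β) le_rfl (hM α) (hM β)
            (hMd α β hαβ) (hstrM α) (hstrM β) c hc hβ
        have hfreeN₁b : Fre N₁ b := (clY b hb hα).1
        have hsubN : N₁ ∪ N₂ ⊆ H₁ := by
          rw [uni]
          exact Finset.union_subset (hMs α) (hMs β)
        have hsubN₁ : N₁ ⊆ H₁ := le_trans Finset.subset_union_left hsubN
        have hsubN₂ : N₂ ⊆ H₁ := le_trans Finset.subset_union_right hsubN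
        have hbcnot : ∀ K : Finset (Sym2 V), K ⊆ H₁ → s(b, c) ∉ K := fun K hK h => henot (hK h)
        set M' := Function.update (Function.update M α (insert s(b, c) N₁)) β N₂ with hM'
        have hM'α : M' α = insert s(b, c) N₁ := by
          rw [hM', Function.update_of_ne hαβ, Function.update_self]
        have hM'β : M' β = N₂ := by rw [hM', Function.update_self]
        have hM'o : ∀ j, j ≠ α → j ≠ β → M' j = M j := by
          intro j h1 h2
          rw [hM', Function.update_of_ne h2, Function.update_of_ne h1]
        have hkey : ∀ j, (j = α ∧ M' j = insert s(b, c) N₁) ∨ (j = β ∧ M' j = N₂) ∨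
            (j ≠ α ∧ j ≠ β ∧ M' j = M j) := by
          intro j
          rcases eq_or_ne j α with h | h1
          · exact Or.inl ⟨h, by rw [h, hM'α]⟩
          · rcases eq_or_ne j β with h | h2
            · exact Or.inr (Or.inl ⟨h, by rw [h, hM'β]⟩)
            · exact Or.inr (Or.inr ⟨h1, h2, hM'o j h1 h2⟩)
        have hNMdisj : ∀ l, l ≠ α → l ≠ β → Disjoint (N₁ ∪ N₂) (M l) := by
          intro l h1 h2
          rw [uni]
          exact Finset.disjoint_union_left.2
            ⟨hMd α l (fun h => h1 h.symm), hMd β l (fun h => h2 h.symm)⟩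
        have hd12 : Disjoint (insert s(b, c) N₁) N₂ := by
          rw [Finset.disjoint_insert_left]
          exact ⟨hbcnot N₂ hsubN₂, dis⟩
        refine ⟨M', ?_, ?_, ?_, ?_⟩
        · intro j
          rcases hkey j with ⟨_, h⟩ | ⟨_, h⟩ | ⟨_, _, h⟩
          · rw [h]; exact isM_insert m1 hfreeN₁b hfreeN₁c
          · rw [h]; exact m2
          · rw [h]; exact hM j
        · intro j k hjk
          rcases hkey j with ⟨hj1, hj⟩ | ⟨hj1, hj⟩ | ⟨hja, hjb, hj⟩ <;>
            rcases hkey k with ⟨hk1, hk⟩ | ⟨hk1, hk⟩ | ⟨hka, hkb, hk⟩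
          · exact absurd (hj1.trans hk1.symm) hjk
          · rw [hj, hk]; exact hd12
          · rw [hj, hk, Finset.disjoint_insert_left]
            exact ⟨hnotj k, Finset.disjoint_of_subset_left Finset.subset_union_left
              (hNMdisj k hka hkb)⟩
          · rw [hj, hk]; exact hd12.symm
          · exact absurd (hj1.trans hk1.symm) hjk
          · rw [hj, hk]
            exact Finset.disjoint_of_subset_left Finset.subset_union_right (hNMdisj k hka hkb)
          · rw [hj, hk, Finset.disjoint_insert_right]
            exact ⟨hnotj j, (Finset.disjoint_of_subset_left Finset.subset_union_left
              (hNMdisj j hja hjb)).symm⟩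
          · rw [hj, hk]
            exact (Finset.disjoint_of_subset_left Finset.subset_union_right
              (hNMdisj j hja hjb)).symm
          · rw [hj, hk]; exact hMd j k hjk
        · intro j
          rcases hkey j with ⟨_, h⟩ | ⟨_, h⟩ | ⟨_, _, h⟩
          · rw [h]; exact Finset.insert_subset he (le_trans hsubN₁ hsub1)
          · rw [h]; exact le_trans hsubN₂ hsub1
          · rw [h]; exact le_trans (hMs j) hsub1
        · intro f hf
          rcases eq_or_ne f s(b, c) with rfl | hne
          · exact ⟨α, by rw [hM'α]; exact Finset.mem_insert_self _ _⟩
          · obtain ⟨j, hj⟩ := hMc f (Finset.mem_erase.2 ⟨hne, hf⟩)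
            rcases hkey j with ⟨hj1, h⟩ | ⟨hj1, h⟩ | ⟨hja, hjb, h⟩
            · have : f ∈ N₁ ∪ N₂ := by
                rw [uni, Finset.mem_union]
                exact Or.inl (hj1 ▸ hj)
              rcases Finset.mem_union.1 this with h1 | h2
              · exact ⟨α, by rw [hM'α]; exact Finset.mem_insert_of_mem h1⟩
              · exact ⟨β, by rw [hM'β]; exact h2⟩
            · have : f ∈ N₁ ∪ N₂ := by
                rw [uni, Finset.mem_union]
                exact Or.inr (hj1 ▸ hj)
              rcases Finset.mem_union.1 this with h1 | h2
              · exact ⟨α, by rw [hM'α]; exact Finset.mem_insert_of_mem h1⟩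
              · exact ⟨β, by rw [hM'β]; exact h2⟩
            · exact ⟨j, by rw [h]; exact hj⟩

/-- Alternating paths (relative to a fixed subgraph `H` of `F`). -/
inductive Alt (F H : Finset (Sym2 V)) (Bs Cs : Set V) (p : ℕ) : V → List V → Prop
  | base (b : V) : b ∈ Bs → deg H b < p → Alt F H Bs Cs p b [b]
  | toC (b c : V) (L : List V) : Alt F H Bs Cs p b L → b ∈ Bs → c ∈ Cs → c ∉ L →
      s(b, c) ∈ F → s(b, c) ∉ H → Alt F H Bs Cs p c (c :: L)
  | toB (c b : V) (L : List V) : Alt F H Bs Cs p c L → c ∈ Cs → b ∈ Bs → b ∉ L →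
      s(b, c) ∈ H → Alt F H Bs Cs p b (b :: L)

variable {F H : Finset (Sym2 V)} {Bs Cs : Set V} {p : ℕ}

lemma alt_endmem {v : V} {L : List V} (h : Alt F H Bs Cs p v L) : v ∈ L := by
  cases h with
  | base b _ _ => exact List.mem_singleton_self _
  | toC b c L _ _ _ _ _ _ => exact List.mem_cons_self
  | toB c b L _ _ _ _ _ => exact List.mem_cons_self

lemma alt_sub {v : V} {L : List V} (h : Alt F H Bs Cs p v L) :
    ∀ u ∈ L, ∃ L', Alt F H Bs Cs p u L' := by
  induction h with
  | base b hb hd =>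
    intro u hu
    rw [List.mem_singleton] at hu
    subst hu
    exact ⟨_, Alt.base _ hb hd⟩
  | toC b c L halt hb hc hcL heF heH ih =>
    intro u hu
    rcases List.mem_cons.1 hu with rfl | hu
    · exact ⟨u :: L, Alt.toC b u L halt hb hc hcL heF heH⟩
    · exact ih u hu
  | toB c b L halt hc hb hbL heH ih =>
    intro u hu
    rcases List.mem_cons.1 hu with rfl | hu
    · exact ⟨u :: L, Alt.toB c u L halt hc hb hbL heH⟩
    · exact ih u hu

lemma alt_main (hHF : H ⊆ F) (hdegH : ∀ u, deg H u ≤ p) (hdBC : Disjoint Bs Cs)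
    {v : V} {L : List V} (h : Alt F H Bs Cs p v L) :
    ∃ K : Finset (Sym2 V), K ⊆ F ∧
      (∀ e u, u ∈ e → u ∉ L → (e ∈ K ↔ e ∈ H)) ∧
      (v ∈ Bs → K.card = H.card ∧ deg K v < p ∧ ∀ u, deg K u ≤ p) ∧
      (v ∈ Cs → K.card = H.card + 1 ∧ (∀ u, u ≠ v → deg K u ≤ p) ∧ deg K v ≤ deg H v + 1) := by
  induction h with
  | base b hb hd =>
    refine ⟨H, hHF, fun _ _ _ _ => Iff.rfl, fun _ => ⟨rfl, hd, hdegH⟩, fun hc => ?_⟩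
    exact absurd rfl (hdBC.ne_of_mem hb hc)
  | toC b c L halt hbB hcC hcL heF heH ih =>
    obtain ⟨K, hKF, pres, hBcl, _⟩ := ih
    obtain ⟨hcard, hdegb, hdegall⟩ := hBcl hbB
    have hbL : b ∈ L := alt_endmem halt
    have he₀K : s(b, c) ∉ K := fun h => heH ((pres s(b, c) c (Sym2.mem_mk_right b c) hcL).1 h)
    refine ⟨insert s(b, c) K, Finset.insert_subset heF hKF, ?_, ?_, ?_⟩
    · intro e u hue huL
      have huc : u ≠ c := fun h => huL (h ▸ List.mem_cons_self)
      have huL' : u ∉ L := fun h => huL (List.mem_cons_of_mem _ h)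
      have hene : e ≠ s(b, c) := by
        rintro rfl
        rcases Sym2.mem_iff.1 hue with rfl | rfl
        · exact huL' hbL
        · exact huc rfl
      rw [Finset.mem_insert]
      constructor
      · rintro (h | h)
        · exact absurd h hene
        · exact (pres e u hue huL').1 h
      · intro h
        exact Or.inr ((pres e u hue huL').2 h)
    · intro hcB
      exact absurd rfl (hdBC.ne_of_mem hcB hcC)
    · intro _
      refine ⟨by rw [Finset.card_insert_of_notMem he₀K, hcard], ?_, ?_⟩
      · intro u hu
        by_cases hue : u ∈ s(b, c)
        · rcases Sym2.mem_iff.1 hue with rfl | rfl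
          · rw [deg_insert_of_mem he₀K hue]
            omega
          · exact absurd rfl hu
        · rw [deg_insert_of_not_mem hue]
          exact hdegall u
      · have hdc : deg K c = deg H c :=
          deg_congr (fun e hce => pres e c hce hcL)
        rw [deg_insert_of_mem he₀K (Sym2.mem_mk_right b c), hdc]
  | toB c b L halt hcC hbB hbL heH ih =>
    obtain ⟨K, hKF, pres, _, hCcl⟩ := ih
    obtain ⟨hcard, hdegex, hdegc⟩ := hCcl hcC
    have hcL : c ∈ L := alt_endmem halt
    have he₁K : s(b, c) ∈ K := (pres s(b, c) b (Sym2.mem_mk_left b c) hbL).2 heH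
    refine ⟨K.erase s(b, c), le_trans (Finset.erase_subset _ _) hKF, ?_, ?_, ?_⟩
    · intro e u hue huL
      have hub : u ≠ b := fun h => huL (h ▸ List.mem_cons_self)
      have huL' : u ∉ L := fun h => huL (List.mem_cons_of_mem _ h)
      have hene : e ≠ s(b, c) := by
        rintro rfl
        rcases Sym2.mem_iff.1 hue with rfl | rfl
        · exact hub rfl
        · exact huL' hcL
      rw [Finset.mem_erase]
      constructor
      · rintro ⟨_, h⟩
        exact (pres e u hue huL').1 h
      · intro h
        exact ⟨hene, (pres e u hue huL').2 h⟩
    · intro _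
      have hdb : deg K b = deg H b := deg_congr (fun e hbe => pres e b hbe hbL)
      have hdb1 : deg (K.erase s(b, c)) b + 1 = deg K b :=
        deg_erase_of_mem he₁K (Sym2.mem_mk_left b c)
      have h1 : 1 ≤ deg H b := mem_deg_pos heH (Sym2.mem_mk_left b c)
      have h2 := hdegH b
      refine ⟨?_, by omega, ?_⟩
      · have h3 := Finset.card_erase_of_mem he₁K
        omega
      · intro u
        by_cases hue : u ∈ s(b, c)
        · rcases Sym2.mem_iff.1 hue with rfl | rfl
          · omega
          · have := deg_erase_of_mem he₁K (Sym2.mem_mk_right b u)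
            have := hdegH u
            omega
        · rw [deg_erase_of_not_mem hue]
          by_cases huc : u = c
          · subst huc
            exact absurd (Sym2.mem_mk_right b u) hue
          · exact hdegex u huc
    · intro hbC
      exact absurd rfl (hdBC.ne_of_mem hbB hbC)

/-- Core structural lemma: existence of `p` disjoint matchings together with a
vertex set `W` certifying optimality. -/
lemma core [Fintype V] (Bs Cs : Set V) (hdBC : Disjoint Bs Cs) (F : Finset (Sym2 V))
    (hFs : ∀ e ∈ F, ∃ b ∈ Bs, ∃ c ∈ Cs, e = s(b, c)) (p : ℕ) :
    ∃ (M : Fin p → Finset (Sym2 V)) (W : Finset V),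
      (∀ i, IsM (M i)) ∧ (∀ i j, i ≠ j → Disjoint (M i) (M j)) ∧ (∀ i, M i ⊆ F) ∧
      (∀ w ∈ W, w ∈ Bs ∪ Cs) ∧
      (∑ i, (M i).card) = p * W.card + (F.filter (fun e => ∀ w ∈ W, w ∉ e)).card := by
  classical
  -- a maximum degree-bounded subgraph H of F
  obtain ⟨H, hHmem, hHmax⟩ := Finset.exists_max_image
    ((F.powerset).filter (fun K => ∀ u, deg K u ≤ p)) Finset.card
    ⟨∅, Finset.mem_filter.2 ⟨Finset.empty_mem_powerset _, fun u => by simp [deg]⟩⟩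
  rw [Finset.mem_filter, Finset.mem_powerset] at hHmem
  obtain ⟨hHF, hdegH⟩ := hHmem
  have hHmax' : ∀ K : Finset (Sym2 V), K ⊆ F → (∀ u, deg K u ≤ p) → K.card ≤ H.card := by
    intro K h1 h2
    exact hHmax K (Finset.mem_filter.2 ⟨Finset.mem_powerset.2 h1, h2⟩)
  set R : V → Prop := fun v => ∃ L, Alt F H Bs Cs p v L with hR
  set W : Finset V := Finset.univ.filter (fun v => (v ∈ Bs ∧ ¬ R v) ∨ (v ∈ Cs ∧ R v)) with hW
  have hWmem : ∀ w, w ∈ W ↔ ((w ∈ Bs ∧ ¬ R w) ∨ (w ∈ Cs ∧ R w)) := by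
    intro w
    simp [hW]
  -- key facts
  have fact1 : ∀ b, b ∈ Bs → ¬ R b → deg H b = p := by
    intro b hb hnR
    rcases lt_or_eq_of_le (hdegH b) with h | h
    · exact absurd ⟨[b], Alt.base b hb h⟩ hnR
    · exact h
  have fact2 : ∀ c, c ∈ Cs → R c → deg H c = p := by
    intro c hc ⟨L, halt⟩
    rcases lt_or_eq_of_le (hdegH c) with hlt | h
    · exfalso
      obtain ⟨K, hKF, _, _, hCcl⟩ := alt_main hHF hdegH hdBC halt
      obtain ⟨hcard, hdegex, hdegc⟩ := hCcl hc
      have hKdeg : ∀ u, deg K u ≤ p := by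
        intro u
        by_cases hu : u = c
        · subst hu; omega
        · exact hdegex u hu
      have := hHmax' K hKF hKdeg
      omega
    · exact h
  have fact3 : ∀ b c, b ∈ Bs → c ∈ Cs → s(b, c) ∈ H → R c → R b := by
    rintro b c hb hc heH ⟨L, halt⟩
    by_cases hbL : b ∈ L
    · exact alt_sub halt b hbL
    · exact ⟨b :: L, Alt.toB c b L halt hc hb hbL heH⟩
  have fact4 : ∀ b c, b ∈ Bs → c ∈ Cs → s(b, c) ∈ F → s(b, c) ∉ H → R b → R c := by
    rintro b c hb hc heF heH ⟨L, halt⟩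
    by_cases hcL : c ∈ L
    · exact alt_sub halt c hcL
    · exact ⟨c :: L, Alt.toC b c L halt hb hc hcL heF heH⟩
  -- structural properties of W
  have hWBC : ∀ w ∈ W, w ∈ Bs ∪ Cs := by
    intro w hw
    rcases (hWmem w).1 hw with ⟨h, _⟩ | ⟨h, _⟩
    · exact Or.inl h
    · exact Or.inr h
  have propA : ∀ e ∈ F, (∀ w ∈ W, w ∉ e) → e ∈ H := by
    intro e heF hno
    obtain ⟨b, hb, c, hc, rfl⟩ := hFs e heF
    have hbW : b ∉ W := fun h => hno b h (Sym2.mem_mk_left b c)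
    have hcW : c ∉ W := fun h => hno c h (Sym2.mem_mk_right b c)
    have hRb : R b := by
      by_contra h
      exact hbW ((hWmem b).2 (Or.inl ⟨hb, h⟩))
    have hnRc : ¬ R c := fun h => hcW ((hWmem c).2 (Or.inr ⟨hc, h⟩))
    by_contra heH
    exact hnRc (fact4 b c hb hc heF heH hRb)
  have propB : ∀ w ∈ W, deg H w = p := by
    intro w hw
    rcases (hWmem w).1 hw with ⟨h1, h2⟩ | ⟨h1, h2⟩
    · exact fact1 w h1 h2
    · exact fact2 w h1 h2
  have propC : ∀ b c, b ∈ Bs → c ∈ Cs → s(b, c) ∈ H → b ∈ W → c ∈ W → False := by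
    intro b c hb hc heH hbW hcW
    have hnRb : ¬ R b := by
      rcases (hWmem b).1 hbW with ⟨_, h⟩ | ⟨h, _⟩
      · exact h
      · exact absurd rfl (hdBC.ne_of_mem hb h)
    have hRc : R c := by
      rcases (hWmem c).1 hcW with ⟨h, _⟩ | ⟨_, h⟩
      · exact absurd rfl (hdBC.ne_of_mem h hc)
      · exact h
    exact hnRb (fact3 b c hb hc heH hRc)
  -- the cardinality identity
  have hsplit : (H.filter (fun e => ∃ w ∈ W, w ∈ e)).card
      + (H.filter (fun e => ∀ w ∈ W, w ∉ e)).card = H.card := by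
    have hnegeq : H.filter (fun e => ¬ ∃ w ∈ W, w ∈ e) = H.filter (fun e => ∀ w ∈ W, w ∉ e) := by
      apply Finset.filter_congr
      intro e _
      simp
    rw [← hnegeq, Finset.card_filter_add_card_filter_not (p := fun e => ∃ w ∈ W, w ∈ e)]
  have hpartA : H.filter (fun e => ∀ w ∈ W, w ∉ e) = F.filter (fun e => ∀ w ∈ W, w ∉ e) := by
    ext e
    simp only [Finset.mem_filter]
    exact ⟨fun ⟨h1, h2⟩ => ⟨hHF h1, h2⟩, fun ⟨h1, h2⟩ => ⟨propA e h1 h2, h2⟩⟩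
  have hpartB : H.filter (fun e => ∃ w ∈ W, w ∈ e) = W.biUnion (fun w => H.filter (fun e => w ∈ e)) := by
    ext e
    simp only [Finset.mem_filter, Finset.mem_biUnion]
    constructor
    · rintro ⟨h1, w, hw, hwe⟩
      exact ⟨w, hw, h1, hwe⟩
    · rintro ⟨w, hw, h1, hwe⟩
      exact ⟨h1, w, hw, hwe⟩
  have hdisjW : ∀ w ∈ W, ∀ w' ∈ W, w ≠ w' →
      Disjoint (H.filter (fun e => w ∈ e)) (H.filter (fun e => w' ∈ e)) := by
    intro w hw w' hw' hne
    rw [Finset.disjoint_left]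
    rintro e he he'
    rw [Finset.mem_filter] at he he'
    obtain ⟨heH, hwe⟩ := he
    obtain ⟨_, hw'e⟩ := he'
    obtain ⟨b, hb, c, hc, rfl⟩ := hFs e (hHF heH)
    rcases Sym2.mem_iff.1 hwe with rfl | rfl <;> rcases Sym2.mem_iff.1 hw'e with rfl | rfl
    · exact hne rfl
    · exact propC w w' hb hc heH hw hw'
    · exact propC w' w hb hc heH hw' hw
    · exact hne rfl
  have hcardB : (H.filter (fun e => ∃ w ∈ W, w ∈ e)).card = p * W.card := by
    rw [hpartB, Finset.card_biUnion hdisjW]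
    have : ∀ w ∈ W, (H.filter (fun e => w ∈ e)).card = p := fun w hw => propB w hw
    rw [Finset.sum_congr rfl this, Finset.sum_const, smul_eq_mul, mul_comm]
  have hHcard : H.card = p * W.card + (F.filter (fun e => ∀ w ∈ W, w ∉ e)).card := by
    rw [← hsplit, hcardB, hpartA]
  -- colour H into p matchings
  obtain ⟨M, hM, hMd, hMs, hMc⟩ := coloring Bs Cs hdBC p H.card H le_rfl
    (fun e he => hFs e (hHF he)) hdegH
  have hsum : (∑ i, (M i).card) = H.card := by
    have huni : Finset.univ.biUnion M = H := by
      ext e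
      simp only [Finset.mem_biUnion, Finset.mem_univ, true_and]
      exact ⟨fun ⟨i, hi⟩ => hMs i hi, fun h => hMc e h⟩
    rw [← huni, Finset.card_biUnion (fun i _ j _ hij => hMd i j hij)]
  exact ⟨M, W, hM, hMd, fun i => le_trans (hMs i) hHF, hWBC,
    by rw [hsum, hHcard]⟩

lemma tri_struct {G : SimpleGraph V} {A B C : Set V} (hpart : IsTripartition G A B C)
    {t : Finset V} (ht : G.IsNClique 3 t) :
    ∃ a ∈ A, ∃ b ∈ B, ∃ c ∈ C, t = {a, b, c} ∧ G.Adj a b ∧ G.Adj a c ∧ G.Adj b c := by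
  obtain ⟨hcov, dAB, dAC, dBC, iA, iB, iC⟩ := hpart
  obtain ⟨x, y, z, hxy, hxz, hyz, rfl⟩ := SimpleGraph.is3Clique_iff.1 ht
  have cover : ∀ u : V, u ∈ A ∨ u ∈ B ∨ u ∈ C := by
    intro u
    have hu : u ∈ A ∪ B ∪ C := hcov ▸ Set.mem_univ u
    rcases hu with (h | h) | h
    · exact Or.inl h
    · exact Or.inr (Or.inl h)
    · exact Or.inr (Or.inr h)
  rcases cover x with hx | hx | hx <;> rcases cover y with hy | hy | hy <;>
    rcases cover z with hz | hz | hz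
  all_goals first
    | exact absurd hxy (iA x hx y hy)
    | exact absurd hxz (iA x hx z hz)
    | exact absurd hyz (iA y hy z hz)
    | exact absurd hxy (iB x hx y hy)
    | exact absurd hxz (iB x hx z hz)
    | exact absurd hyz (iB y hy z hz)
    | exact absurd hxy (iC x hx y hy)
    | exact absurd hxz (iC x hx z hz)
    | exact absurd hyz (iC y hy z hz)
    | exact ⟨x, hx, y, hy, z, hz, rfl, hxy, hxz, hyz⟩
    | exact ⟨x, hx, z, hz, y, hy, by ext u; simp; tauto, hxz, hxy, hyz.symm⟩
    | exact ⟨y, hy, x, hx, z, hz, by ext u; simp; tauto, hxy.symm, hyz, hxz⟩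
    | exact ⟨z, hz, x, hx, y, hy, by ext u; simp; tauto, hxz.symm, hyz.symm, hxy⟩
    | exact ⟨y, hy, z, hz, x, hx, by ext u; simp; tauto, hyz, hxy.symm, hxz.symm⟩
    | exact ⟨z, hz, y, hy, x, hx, by ext u; simp; tauto, hyz.symm, hxz.symm, hxy.symm⟩

end TauAux

open TauAux in
/-- In a bilaterally-complete tripartite graph `G` with complete sides `G[A∪B]`,
`G[A∪C]` and `|A| = p`, there exist pairwise disjoint matchings `M_1, …, M_k` in
`G[B ∪ C]` with `k ≤ p` and `|M_1| + ⋯ + |M_k| = τ△(G)`. -/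
theorem exists_matchings_summing_to_tau [Fintype V] (G : SimpleGraph V)
    (A B C : Set V) (hpart : IsTripartition G A B C)
    (hAB : CompleteSide G A B) (hAC : CompleteSide G A C)
    (p : ℕ) (hp : A.ncard = p) :
    ∃ k ≤ p, ∃ M : Fin k → Set (Sym2 V),
      (∀ i, IsMatchingIn (edgesBetween G B C) (M i)) ∧
      (∀ i j, i ≠ j → Disjoint (M i) (M j)) ∧
      ∑ i, (M i).ncard = triTransversalNum G := by
  classical
  obtain ⟨hcov, dAB, dAC, dBC, iA, iB, iC⟩ := hpart
  have hpart' : IsTripartition G A B C := ⟨hcov, dAB, dAC, dBC, iA, iB, iC⟩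
  have hAfin : A.Finite := Set.toFinite A
  rcases Nat.eq_zero_or_pos p with rfl | hppos
  · -- p = 0 : A is empty, there are no triangles
    have hAempty : A = ∅ := (Set.ncard_eq_zero hAfin).1 hp
    have htau : triTransversalNum G = 0 := by
      have h0 : (0 : ℕ) ∈ {n | ∃ E' : Set (Sym2 V), IsTriTransversal G E' ∧ E'.ncard = n} := by
        refine ⟨∅, ⟨Set.empty_subset _, fun t ht => ?_⟩, Set.ncard_empty _⟩
        obtain ⟨a, ha, _⟩ := tri_struct hpart' ht
        rw [hAempty] at ha
        exact absurd ha (Set.notMem_empty a)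
      exact Nat.le_antisymm (Nat.sInf_le h0) (Nat.zero_le _)
    exact ⟨0, le_rfl, fun i => i.elim0, fun i => i.elim0, fun i => i.elim0,
      by rw [htau]; simp⟩
  · -- p > 0
    have hFfin : (edgesBetween G B C).Finite := Set.toFinite _
    set F : Finset (Sym2 V) := hFfin.toFinset with hF
    have hFmem : ∀ e, e ∈ F ↔ e ∈ edgesBetween G B C := fun e => hFfin.mem_toFinset
    have hFs : ∀ e ∈ F, ∃ b ∈ B, ∃ c ∈ C, e = s(b, c) := by
      intro e he
      obtain ⟨_, b, hb, c, hc, h⟩ := (hFmem e).1 he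
      exact ⟨b, hb, c, hc, h⟩
    have hFedge : ∀ e ∈ F, e ∈ G.edgeSet := fun e he => ((hFmem e).1 he).1
    obtain ⟨M, W, hM, hMd, hMs, hWBC, hsum⟩ := core B C dBC F hFs p
    set FnW : Finset (Sym2 V) := F.filter (fun e => ∀ w ∈ W, w ∉ e) with hFnW
    -- the transversal candidate
    set Af : Finset V := hAfin.toFinset with hAf
    have hAfcard : Af.card = p := by
      rw [hAf, ← hp]
      exact (Set.ncard_eq_toFinset_card A hAfin).symm
    set AW : Finset (Sym2 V) := (Af ×ˢ W).image (fun q => s(q.1, q.2)) with hAW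
    have hAnotBC : ∀ a ∈ A, a ∉ B ∪ C := by
      intro a ha h
      rcases h with h | h
      · exact dAB.ne_of_mem ha h rfl
      · exact dAC.ne_of_mem ha h rfl
    have hAWmem : ∀ e, e ∈ AW ↔ ∃ a ∈ A, ∃ w ∈ W, e = s(a, w) := by
      intro e
      rw [hAW]
      simp only [Finset.mem_image, Finset.mem_product, Prod.exists]
      constructor
      · rintro ⟨a, w, ⟨ha, hw⟩, rfl⟩
        exact ⟨a, (hAfin.mem_toFinset).1 ha, w, hw, rfl⟩
      · rintro ⟨a, ha, w, hw, rfl⟩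
        exact ⟨a, w, ⟨(hAfin.mem_toFinset).2 ha, hw⟩, rfl⟩
    have hAWcard : AW.card = p * W.card := by
      rw [hAW, Finset.card_image_of_injOn, Finset.card_product, hAfcard]
      intro q hq q' hq' heq
      simp only [Finset.coe_product, Set.mem_prod, Finset.mem_coe] at hq hq'
      obtain ⟨hq1, hq2⟩ := hq
      obtain ⟨hq1', hq2'⟩ := hq'
      rcases Sym2.eq_iff.1 heq with ⟨h1, h2⟩ | ⟨h1, h2⟩
      · exact Prod.ext h1 h2
      · exfalso
        apply hAnotBC q.1 ((hAfin.mem_toFinset).1 hq1)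
        rw [h1]
        exact hWBC q'.2 hq2'
    have hdisjTT : Disjoint FnW AW := by
      rw [Finset.disjoint_left]
      intro e he hea
      obtain ⟨b, hb, c, hc, rfl⟩ := hFs e (Finset.filter_subset _ _ he)
      obtain ⟨a, ha, w, hw, heq⟩ := (hAWmem _).1 hea
      have : a ∈ s(b, c) := heq ▸ Sym2.mem_mk_left a w
      rcases Sym2.mem_iff.1 this with rfl | rfl
      · exact hAnotBC a ha (Or.inl hb)
      · exact hAnotBC a ha (Or.inr hc)
    set TTf : Finset (Sym2 V) := FnW ∪ AW with hTTf
    set TT : Set (Sym2 V) := ↑TTf with hTT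
    have hTTcard : TT.ncard = FnW.card + p * W.card := by
      rw [hTT, Set.ncard_coe_finset, hTTf, Finset.card_union_of_disjoint hdisjTT, hAWcard]
    have hTTtrans : IsTriTransversal G TT := by
      constructor
      · intro e he
        rw [hTT, Finset.mem_coe, hTTf, Finset.mem_union] at he
        rcases he with he | he
        · exact hFedge e (Finset.filter_subset _ _ he)
        · obtain ⟨a, ha, w, hw, rfl⟩ := (hAWmem e).1 he
          rcases hWBC w hw with h | h
          · exact (G.mem_edgeSet).2 (hAB a ha w h)
          · exact (G.mem_edgeSet).2 (hAC a ha w h)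
      · intro t ht
        obtain ⟨a, ha, b, hb, c, hc, rfl, hab, hac, hbc⟩ := tri_struct hpart' ht
        have hbcF : s(b, c) ∈ F := (hFmem _).2 ⟨(G.mem_edgeSet).2 hbc, b, hb, c, hc, rfl⟩
        have hat : a ∈ ({a, b, c} : Finset V) := by simp
        have hbt : b ∈ ({a, b, c} : Finset V) := by simp
        have hct : c ∈ ({a, b, c} : Finset V) := by simp
        by_cases hcase : ∀ w ∈ W, w ∉ s(b, c)
        · refine ⟨s(b, c), ⟨b, hbt, c, hct, G.ne_of_adj hbc, rfl⟩, ?_⟩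
          rw [hTT, Finset.mem_coe, hTTf, Finset.mem_union]
          exact Or.inl (Finset.mem_filter.2 ⟨hbcF, hcase⟩)
        · push_neg at hcase
          obtain ⟨w, hw, hwbc⟩ := hcase
          have hwt : w ∈ ({a, b, c} : Finset V) := by
            rcases Sym2.mem_iff.1 hwbc with rfl | rfl
            · exact hbt
            · exact hct
          have hanw : a ≠ w := by
            intro h
            apply hAnotBC a ha
            rw [h]
            exact hWBC w hw
          refine ⟨s(a, w), ⟨a, hat, w, hwt, hanw, rfl⟩, ?_⟩
          rw [hTT, Finset.mem_coe, hTTf, Finset.mem_union]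
          exact Or.inr ((hAWmem _).2 ⟨a, ha, w, hw, rfl⟩)
    have hTTval : TT.ncard = ∑ i, (M i).card := by
      rw [hTTcard]
      omega
    -- the union of the matchings
    set Hf : Finset (Sym2 V) := Finset.univ.biUnion M with hHf
    have hHfF : Hf ⊆ F := by
      intro e he
      rw [hHf, Finset.mem_biUnion] at he
      obtain ⟨i, _, hi⟩ := he
      exact hMs i hi
    have hHfcard : Hf.card = ∑ i, (M i).card := by
      rw [hHf]
      exact Finset.card_biUnion (fun i _ j _ hij => hMd i j hij)
    have hHfdeg : ∀ v, deg Hf v ≤ p := by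
      intro v
      unfold deg
      rw [hHf, Finset.filter_biUnion]
      refine le_trans Finset.card_biUnion_le ?_
      have hone : ∀ i : Fin p, ((M i).filter (fun e => v ∈ e)).card ≤ 1 := by
        intro i
        rw [Finset.card_le_one]
        intro e he f hf
        rw [Finset.mem_filter] at he hf
        by_contra hne
        exact hM i e he.1 f hf.1 hne v he.2 hf.2
      calc ∑ i, ((M i).filter (fun e => v ∈ e)).card ≤ ∑ _i : Fin p, 1 :=
            Finset.sum_le_sum (fun i _ => hone i)
        _ = p := by simp
    -- lower bound : every transversal has at least Hf.card edges
    have hlower : ∀ E' : Set (Sym2 V), IsTriTransversal G E' → Hf.card ≤ E'.ncard := by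
      intro E' hE'
      have hE'fin : E'.Finite := Set.toFinite _
      set Ef : Finset (Sym2 V) := hE'fin.toFinset with hEf
      have hEfmem : ∀ e, e ∈ Ef ↔ e ∈ E' := fun e => hE'fin.mem_toFinset
      have hEfcard : E'.ncard = Ef.card := by
        rw [hEf]
        exact Set.ncard_eq_toFinset_card E' hE'fin
      set T : V → Finset (Sym2 V) := fun a => Ef.filter (fun e => a ∈ e) with hT
      have hTdisj : ∀ a ∈ Af, ∀ a' ∈ Af, a ≠ a' → Disjoint (T a) (T a') := by
        intro a ha a' ha' hne
        rw [Finset.disjoint_left]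
        intro e he he'
        rw [hT] at he he'
        simp only [Finset.mem_filter] at he he'
        obtain ⟨heE, hae⟩ := he
        obtain ⟨_, ha'e⟩ := he'
        have heedge : e ∈ G.edgeSet := hE'.1 ((hEfmem e).1 heE)
        induction e with
        | _ x y =>
          have hadj : G.Adj x y := (G.mem_edgeSet).1 heedge
          have haA : a ∈ A := (hAfin.mem_toFinset).1 ha
          have ha'A : a' ∈ A := (hAfin.mem_toFinset).1 ha'
          rcases Sym2.mem_iff.1 hae with rfl | rfl <;> rcases Sym2.mem_iff.1 ha'e with rfl | rfl
          · exact hne rfl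
          · exact iA a haA a' ha'A hadj
          · exact iA a' ha'A a haA hadj
          · exact hne rfl
      have hdisj2 : ∀ a ∈ Af, Disjoint (Ef.filter (fun e => e ∈ F)) (T a) := by
        intro a ha
        rw [Finset.disjoint_left]
        intro e he he'
        rw [Finset.mem_filter] at he
        rw [hT, Finset.mem_filter] at he'
        obtain ⟨b, hb, c, hc, rfl⟩ := hFs e he.2
        have haA : a ∈ A := (hAfin.mem_toFinset).1 ha
        rcases Sym2.mem_iff.1 he'.2 with rfl | rfl
        · exact hAnotBC a haA (Or.inl hb)
        · exact hAnotBC a haA (Or.inr hc)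
      have step1 : (Ef.filter (fun e => e ∈ F)).card + ∑ a ∈ Af, (T a).card ≤ Ef.card := by
        have hsub : (Ef.filter (fun e => e ∈ F)) ∪ Af.biUnion T ⊆ Ef := by
          apply Finset.union_subset (Finset.filter_subset _ _)
          intro e he
          rw [Finset.mem_biUnion] at he
          obtain ⟨a, _, ha⟩ := he
          exact Finset.filter_subset _ _ ha
        calc (Ef.filter (fun e => e ∈ F)).card + ∑ a ∈ Af, (T a).card
            = ((Ef.filter (fun e => e ∈ F)) ∪ Af.biUnion T).card := by
              rw [Finset.card_union_of_disjoint, Finset.card_biUnion hTdisj]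
              rw [Finset.disjoint_biUnion_right]
              exact hdisj2
          _ ≤ Ef.card := Finset.card_le_card hsub
      have step2 : (Hf ∩ Ef).card ≤ (Ef.filter (fun e => e ∈ F)).card := by
        apply Finset.card_le_card
        intro e he
        rw [Finset.mem_inter] at he
        exact Finset.mem_filter.2 ⟨he.2, hHfF he.1⟩
      have step3 : ∀ a ∈ Af, (Hf \ Ef).card ≤ p * (T a).card := by
        intro a ha
        have haA : a ∈ A := (hAfin.mem_toFinset).1 ha
        have hsub : Hf \ Ef ⊆ (T a).biUnion
            (fun e' => Hf.filter (fun f => ∃ v, v ∈ f ∧ v ∈ e' ∧ v ≠ a)) := by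
          intro e he
          rw [Finset.mem_sdiff] at he
          obtain ⟨heHf, heEf⟩ := he
          obtain ⟨b, hb, c, hc, rfl⟩ := hFs _ (hHfF heHf)
          have hbc : G.Adj b c := (G.mem_edgeSet).1 (hFedge _ (hHfF heHf))
          have hclique : G.IsNClique 3 ({a, b, c} : Finset V) :=
            (SimpleGraph.is3Clique_triple_iff).2 ⟨hAB a haA b hb, hAC a haA c hc, hbc⟩
          obtain ⟨e', he'tri, he'E⟩ := hE'.2 _ hclique
          obtain ⟨u, hut, v, hvt, huv, rfl⟩ := he'tri
          simp only [Finset.mem_insert, Finset.mem_singleton] at hut hvt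
          -- identify which edge of the triangle was hit
          have hkey : s(u, v) = s(b, c) ∨ (a ∈ s(u, v) ∧ (b ∈ s(u, v) ∨ c ∈ s(u, v))) := by
            rcases hut with rfl | rfl | rfl <;> rcases hvt with rfl | rfl | rfl
            · exact absurd rfl huv
            · exact Or.inr ⟨Sym2.mem_mk_left _ _, Or.inl (Sym2.mem_mk_right _ _)⟩
            · exact Or.inr ⟨Sym2.mem_mk_left _ _, Or.inr (Sym2.mem_mk_right _ _)⟩
            · exact Or.inr ⟨Sym2.mem_mk_right _ _, Or.inl (Sym2.mem_mk_left _ _)⟩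
            · exact absurd rfl huv
            · exact Or.inl rfl
            · exact Or.inr ⟨Sym2.mem_mk_right _ _, Or.inr (Sym2.mem_mk_left _ _)⟩
            · exact Or.inl (Sym2.eq_swap)
            · exact absurd rfl huv
          rcases hkey with heq | ⟨hae', hbce'⟩
          · exfalso
            exact heEf ((hEfmem _).2 (heq ▸ he'E))
          · rw [Finset.mem_biUnion]
            refine ⟨s(u, v), ?_, ?_⟩
            · rw [hT, Finset.mem_filter]
              exact ⟨(hEfmem _).2 he'E, hae'⟩
            · rw [Finset.mem_filter]
              refine ⟨heHf, ?_⟩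
              rcases hbce' with h | h
              · refine ⟨b, Sym2.mem_mk_left _ _, h, ?_⟩
                intro hba
                exact hAnotBC a haA (Or.inl (hba ▸ hb))
              · refine ⟨c, Sym2.mem_mk_right _ _, h, ?_⟩
                intro hca
                exact hAnotBC a haA (Or.inr (hca ▸ hc))
        refine le_trans (Finset.card_le_card hsub) (le_trans Finset.card_biUnion_le ?_)
        have hbound : ∀ e' ∈ T a,
            (Hf.filter (fun f => ∃ v, v ∈ f ∧ v ∈ e' ∧ v ≠ a)).card ≤ p := by
          intro e' he'
          rw [hT, Finset.mem_filter] at he'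
          obtain ⟨he'Ef, hae'⟩ := he'
          obtain ⟨v₀, rfl⟩ := Sym2.mem_iff_exists.1 hae'
          have hv₀a : v₀ ≠ a := by
            intro h
            have hadj : G.Adj a v₀ := (G.mem_edgeSet).1 (hE'.1 ((hEfmem _).1 he'Ef))
            exact (G.ne_of_adj hadj) h.symm
          refine le_trans (Finset.card_le_card ?_) (hHfdeg v₀)
          intro f hf
          rw [Finset.mem_filter] at hf
          obtain ⟨hfHf, v, hvf, hve', hva⟩ := hf
          rw [Finset.mem_filter]
          refine ⟨hfHf, ?_⟩
          rcases Sym2.mem_iff.1 hve' with rfl | rfl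
          · exact absurd rfl hva
          · exact hvf
        calc ∑ e' ∈ T a, (Hf.filter (fun f => ∃ v, v ∈ f ∧ v ∈ e' ∧ v ≠ a)).card
            ≤ ∑ _e' ∈ T a, p := Finset.sum_le_sum hbound
          _ = p * (T a).card := by rw [Finset.sum_const, smul_eq_mul, mul_comm]
      have step4 : (Hf \ Ef).card ≤ ∑ a ∈ Af, (T a).card := by
        have h1 : p * (Hf \ Ef).card ≤ p * ∑ a ∈ Af, (T a).card := by
          calc p * (Hf \ Ef).card = ∑ _a ∈ Af, (Hf \ Ef).card := by
                rw [Finset.sum_const, smul_eq_mul, hAfcard]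
            _ ≤ ∑ a ∈ Af, p * (T a).card := Finset.sum_le_sum step3
            _ = p * ∑ a ∈ Af, (T a).card := by rw [Finset.mul_sum]
        exact Nat.le_of_mul_le_mul_left h1 hppos
      have hfin : Hf.card ≤ Ef.card := by
        have := Finset.card_inter_add_card_sdiff Hf Ef
        omega
      rw [hEfcard]
      exact hfin
    -- conclude
    have hmemS : (∑ i, (M i).card) ∈
        {n | ∃ E' : Set (Sym2 V), IsTriTransversal G E' ∧ E'.ncard = n} :=
      ⟨TT, hTTtrans, hTTval⟩
    have htau : triTransversalNum G = ∑ i, (M i).card := by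
      apply le_antisymm (Nat.sInf_le hmemS)
      apply le_csInf ⟨_, hmemS⟩
      rintro n ⟨E', hE', rfl⟩
      rw [← hHfcard]
      exact hlower E' hE'
    refine ⟨p, le_rfl, fun i => ↑(M i), ?_, ?_, ?_⟩
    · intro i
      constructor
      · intro e he
        rw [Finset.mem_coe] at he
        exact (hFmem e).1 (hMs i he)
      · intro e he f hf hne
        exact hM i e he f hf hne
    · intro i j hij
      rw [Finset.disjoint_coe]
      exact hMd i j hij
    · rw [htau]
      congr 1
      ext i
      rw [Set.ncard_coe_finset]
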